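/- arXiv:2006.13785 — 13 statements merged into one kernel-verified Lean document; each statement's English description precedes it below -/
import Mathlib

section
/- In a reduced ring R, the relation a ≤ b defined by a² = ab is a partial order on R. -/
private lemma sq_zero {R : Type*} [Ring R] [IsReduced R] {x : R} (h : x * x = 0) : x = 0 :=
  IsReduced.eq_zero x ⟨2, by rw [pow_two]; exact h⟩

private lemma mul_comm_zero {R : Type*} [Ring R] [IsReduced R] {x y : R} (h : x * y = 0) :
    y * x = 0 := by
  apply sq_zero
  calc y * x * (y * x) = y * (x * y) * x := by noncomm_ring
    _ = 0 := by rw [h]; simp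

/-- In a reduced ring `R`, the relation `a ≤ b` defined by `a² = ab`
is a partial order on `R`. -/
theorem stmt_0 (R : Type*) [Ring R] [IsReduced R] :
    IsPartialOrder R (fun a b => a * a = a * b) := by
  have key : ∀ a b : R, a * a = a * b → b * a = a * a := by
    intro a b h
    have h0 : a * (a - b) = 0 := by rw [mul_sub, h, sub_self]
    have h1 : (a - b) * a = 0 := mul_comm_zero h0
    rw [sub_mul, sub_eq_zero] at h1
    exact h1.symm
  refine { refl := fun a => rfl, trans := ?_, antisymm := ?_ }
  · intro a b c hab hbc
    have hba : b * a = a * a := key a b hab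
    have hcb : c * b = b * b := key b c hbc
    have h1 : a * a * c = a * a * a := by
      rw [hab, mul_assoc, ← hbc, ← mul_assoc, ← hab, mul_assoc, ← hab, ← mul_assoc]
    have h2 : a * a * (a - c) = 0 := by rw [mul_sub, h1, sub_self]
    have h4 : a * (a - c) * a = 0 := by
      apply sq_zero
      calc a * (a - c) * a * (a * (a - c) * a)
          = a * (a - c) * (a * a * (a - c)) * a := by noncomm_ring
        _ = 0 := by rw [h2]; simp
    have h5 : a * (a - c) = 0 := by
      apply sq_zero
      calc a * (a - c) * (a * (a - c)) = (a * (a - c) * a) * (a - c) := by noncomm_ring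
        _ = 0 := by rw [h4]; simp
    rw [mul_sub, sub_eq_zero] at h5
    exact h5
  · intro a b hab hba
    have h : (a - b) * (a - b) = 0 := by
      have e : (a - b) * (a - b) = (a * a - a * b) + (b * b - b * a) := by noncomm_ring
      rw [e, hab, hba]; simp
    exact sub_eq_zero.mp (sq_zero h)
end

section
/- Let R be a reduced ring which is rr-good. Then for each a ∈ R, the annihilator of a contains a unique largest idempotent; namely e = 1 ∧_rr (1 − a) satisfies e² = e, ea = 0, and any idempotent f with fa = 0 satisfies f ≤_rr e (equivalently f = fe). -/
/-- In an rr-good reduced ring, the annihilator of each element contains a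
unique largest idempotent, namely `e = 1 ∧_rr (1 - a)`. -/
theorem stmt_5 {R : Type*} [Ring R] [IsReduced R]
    (hgood : ∀ a b : R, ∃ c : R, c * c = c * a ∧ c * c = c * b ∧
      ∀ d : R, d * d = d * a → d * d = d * b → d * d = d * c)
    (a : R) :
    ∃ e : R, (e * e = e * 1 ∧ e * e = e * (1 - a) ∧
        ∀ d : R, d * d = d * 1 → d * d = d * (1 - a) → d * d = d * e) ∧
      e * e = e ∧ e * a = 0 ∧
      ∀ f : R, f * f = f → f * a = 0 → f = f * e := by
  obtain ⟨e, h1, h2, h3⟩ := hgood 1 (1 - a)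
  have hidem : e * e = e := by rw [h1, mul_one]
  have hann : e * a = 0 := by
    have := h2
    rw [hidem, mul_sub, mul_one, eq_sub_iff_add_eq, add_eq_left] at this
    exact this
  refine ⟨e, ⟨h1, h2, h3⟩, hidem, hann, ?_⟩
  intro f hf hfa
  have := h3 f (by rw [hf, mul_one]) (by rw [hf, mul_sub, mul_one, hfa, sub_zero])
  rw [hf] at this
  exact this
end

section
/- Let R be a reduced ring such that for every a ∈ R with ann(a) ≠ 0, there is a unique largest idempotent e ≠ 0 in ann(a) (largest meaning every idempotent f in ann(a) satisfies f = fe). Then R is weakly Baer: for every a ∈ R, ann(a) is generated by an idempotent. -/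
/-- In a reduced ring, squares vanish only at zero. -/
lemma sq_eq_zero_aux {R : Type*} [Ring R] [IsReduced R] {z : R} (hz : z * z = 0) : z = 0 :=
  IsReduced.eq_zero z ⟨2, by simpa [pow_two] using hz⟩

/-- In a reduced ring, idempotents are central. -/
lemma idem_central_aux {R : Type*} [Ring R] [IsReduced R] {e : R} (he : e * e = e) (x : R) :
    e * x = x * e := by
  have h1 : e * x - e * x * e = 0 := by
    apply sq_eq_zero_aux
    have : (e * x - e * x * e) * (e * x - e * x * e)
        = -(e * x * ((e * e - e) * x)) + e * x * ((e * e - e) * x * e) := by noncomm_ring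
    rw [this, he]
    simp
  have h2 : x * e - e * x * e = 0 := by
    apply sq_eq_zero_aux
    have : (x * e - e * x * e) * (x * e - e * x * e)
        = x * ((e - e * e) * x * e) - e * (x * ((e - e * e) * x * e)) := by noncomm_ring
    rw [this, he]
    simp
  rw [sub_eq_zero.mp h1, sub_eq_zero.mp h2]

/-- If in a reduced ring every element with nonzero annihilator admits a unique
largest nonzero idempotent in its annihilator, then the ring is weakly Baer. -/
theorem stmt_6 {R : Type*} [Ring R] [IsReduced R]
    (h : ∀ a : R, (∃ x : R, x ≠ 0 ∧ a * x = 0) →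
      ∃ e : R, e ≠ 0 ∧ e * e = e ∧ a * e = 0 ∧
        ∀ f : R, f * f = f → a * f = 0 → f = f * e) :
    ∀ a : R, ∃ e : R, e * e = e ∧ ∀ x : R, a * x = 0 ↔ ∃ r : R, x = e * r := by
  intro a
  by_cases hA : ∃ x : R, x ≠ 0 ∧ a * x = 0
  · obtain ⟨e, he0, hee, hae, hmax⟩ := h a hA
    refine ⟨e, hee, fun x => ⟨fun hx => ?_, fun ⟨r, hr⟩ => by
      rw [hr, ← mul_assoc, hae, zero_mul]⟩⟩
    -- key claim: a*y = 0 ∧ e*y = 0 → y = 0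
    have key : ∀ y : R, a * y = 0 → e * y = 0 → y = 0 := by
      intro y hay hey
      by_contra hy0
      obtain ⟨k, hk0, hkk, hk, -⟩ := h (a + e) ⟨y, hy0, by rw [add_mul, hay, hey, add_zero]⟩
      have hk2 : a * k + e * k = 0 := by rw [← add_mul, hk]
      have hk' : a * k = -(e * k) := eq_neg_of_add_eq_zero_left hk2
      have haek : a * (e * k) = 0 := by rw [← mul_assoc, hae, zero_mul]
      have haak : a * (a * k) = 0 := by rw [hk', mul_neg, haek, neg_zero]
      have hcent := idem_central_aux hkk
      have hak : a * k = 0 := by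
        apply sq_eq_zero_aux
        calc a * k * (a * k) = a * (k * a) * k := by noncomm_ring
          _ = a * (a * k) * k := by rw [hcent a]
          _ = 0 := by rw [haak, zero_mul]
      have hek : e * k = 0 := by rw [← neg_eq_zero, ← hk', hak]
      have hke : k = k * e := hmax k hkk hak
      rw [← idem_central_aux hee k, hek] at hke
      exact hk0 hke
    -- now x = e * x
    have hy : x - e * x = 0 := by
      apply key
      · rw [mul_sub, hx, ← mul_assoc, hae, zero_mul, sub_zero]
      · rw [mul_sub, ← mul_assoc, hee, sub_self]
    exact ⟨x, sub_eq_zero.mp hy⟩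
  · refine ⟨0, by rw [mul_zero], fun x => ⟨fun hx => ?_, fun ⟨r, hr⟩ => by
      rw [hr, zero_mul, mul_zero]⟩⟩
    have hx0 : x = 0 := by
      by_contra hx0
      exact hA ⟨x, hx0, hx⟩
    exact ⟨0, by rw [hx0, zero_mul]⟩
end

section
/- Let R be a reduced ring and r, s ∈ R with 0 ≠ k₁ ≤_rr r and k₁ ≤_rr s. If k₂ is a nonzero element with k₂ ≤_rr r and k₂ ≤_rr s + k₁, then k₁k₂ = 0 and k₁ ≤_rr k₁ + k₂, and k₁ + k₂ is an rr-lower bound of both r and s. -/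
lemma sq_zero_aux {R : Type*} [Ring R] [IsReduced R] {a : R} (h : a * a = 0) : a = 0 :=
  IsNilpotent.eq_zero ⟨2, by simpa [pow_succ] using h⟩

lemma mul_comm_zero_aux {R : Type*} [Ring R] [IsReduced R] {a b : R} (h : a * b = 0) :
    b * a = 0 := by
  apply sq_zero_aux
  calc b * a * (b * a) = b * (a * b) * a := by noncomm_ring
  _ = 0 := by rw [h]; noncomm_ring

/-- Lemma on lower bounds: if `0 ≠ k₁ ≤rr r, s` and `0 ≠ k₂ ≤rr r, s + k₁`,
then `k₁k₂ = 0`, `k₁ ≤rr k₁ + k₂`, and `k₁ + k₂` is an rr-lower bound of `r` and `s`. -/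
theorem stmt_7 {R : Type*} [Ring R] [IsReduced R] (r s k₁ k₂ : R)
    (hk₁ : k₁ ≠ 0) (h1r : k₁ * k₁ = k₁ * r) (h1s : k₁ * k₁ = k₁ * s)
    (hk₂ : k₂ ≠ 0) (h2r : k₂ * k₂ = k₂ * r) (h2s : k₂ * k₂ = k₂ * (s + k₁)) :
    k₁ * k₂ = 0 ∧ k₁ * k₁ = k₁ * (k₁ + k₂) ∧
      (k₁ + k₂) * (k₁ + k₂) = (k₁ + k₂) * r ∧
      (k₁ + k₂) * (k₁ + k₂) = (k₁ + k₂) * s := by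
  -- k₁ * (r - s) = 0
  have hd : k₁ * (r - s) = 0 := by rw [mul_sub, ← h1r, ← h1s]; noncomm_ring
  have hd' : (r - s) * k₁ = 0 := mul_comm_zero_aux hd
  -- k₂ * k₁ = k₂ * (r - s)
  have h2d : k₂ * k₁ = k₂ * (r - s) := by
    have h := h2s.symm.trans h2r
    rw [mul_add] at h
    rw [mul_sub]
    exact eq_sub_of_add_eq (by rw [add_comm]; exact h)
  have h211 : k₂ * k₁ * k₁ = 0 := by
    rw [h2d, mul_assoc, hd', mul_zero]
  have h121 : k₁ * k₂ * k₁ = 0 := by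
    apply sq_zero_aux
    calc k₁ * k₂ * k₁ * (k₁ * k₂ * k₁) = k₁ * (k₂ * k₁ * k₁) * (k₂ * k₁) := by noncomm_ring
    _ = 0 := by rw [h211]; noncomm_ring
  have h21 : k₂ * k₁ = 0 := by
    apply sq_zero_aux
    calc k₂ * k₁ * (k₂ * k₁) = k₂ * (k₁ * k₂ * k₁) := by noncomm_ring
    _ = 0 := by rw [h121, mul_zero]
  have h12 : k₁ * k₂ = 0 := mul_comm_zero_aux h21
  refine ⟨h12, ?_, ?_, ?_⟩
  · rw [mul_add, h12, add_zero]
  · calc (k₁ + k₂) * (k₁ + k₂) = k₁ * k₁ + k₂ * k₂ + (k₁ * k₂ + k₂ * k₁) := by noncomm_ring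
    _ = k₁ * r + k₂ * r := by rw [h12, h21, h1r, h2r]; abel
    _ = (k₁ + k₂) * r := by noncomm_ring
  · calc (k₁ + k₂) * (k₁ + k₂) = k₁ * k₁ + k₂ * k₂ + (k₁ * k₂ + k₂ * k₁) := by noncomm_ring
    _ = k₁ * s + (k₂ * s + k₂ * k₁) := by rw [h12, h1s, h2s, mul_add, h21]; abel
    _ = (k₁ + k₂) * s := by rw [h21]; noncomm_ring
end

section
/- Let R be a reduced ring and r, s ∈ R. If k₁ is a maximal element among the nonzero rr-lower bounds of r and s (i.e., no nonzero common lower bound is strictly rr-above k₁), then r and s + k₁ have no nonzero common rr-lower bound. In particular this holds when k₁ = r ∧_rr s exists. -/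
/-- If `k₁` is maximal among the nonzero common rr-lower bounds of `r` and `s`,
then `r` and `s + k₁` have no nonzero common rr-lower bound. -/
theorem stmt_8 {R : Type*} [Ring R] [IsReduced R] (r s k₁ : R)
    (hk₁ : k₁ ≠ 0) (h1r : k₁ * k₁ = k₁ * r) (h1s : k₁ * k₁ = k₁ * s)
    (hmax : ∀ k : R, k ≠ 0 → k * k = k * r → k * k = k * s →
      k₁ * k₁ = k₁ * k → k = k₁) :
    ∀ c : R, c * c = c * r → c * c = c * (s + k₁) → c = 0 := by
  have sq0 : ∀ x : R, x * x = 0 → x = 0 := fun x h =>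
    IsReduced.eq_zero x ⟨2, by rwa [pow_two]⟩
  have swap : ∀ a b : R, a * b = 0 → b * a = 0 := by
    intro a b h
    apply sq0
    have : b * a * (b * a) = b * (a * b) * a := by noncomm_ring
    rw [this, h, mul_zero, zero_mul]
  have mid : ∀ a x b : R, a * b = 0 → a * x * b = 0 := by
    intro a x b h
    have h' := swap a b h
    apply sq0
    have : a * x * b * (a * x * b) = a * x * (b * a) * (x * b) := by noncomm_ring
    rw [this, h', mul_zero, zero_mul]
  intro c hcr hcs
  -- two-sided versions
  have hrc : r * c = c * c := by
    have h1 : c * (c - r) = 0 := by rw [mul_sub, ← hcr, sub_self]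
    have h2 := swap _ _ h1
    rw [sub_mul, sub_eq_zero] at h2
    exact h2.symm
  have hskc : (s + k₁) * c = c * c := by
    have h1 : c * (c - (s + k₁)) = 0 := by rw [mul_sub, ← hcs, sub_self]
    have h2 := swap _ _ h1
    rw [sub_mul, sub_eq_zero] at h2
    exact h2.symm
  -- k₁ * (s - r) = 0, hence (s - r) * c * k₁ = 0
  have hsr : k₁ * (s - r) = 0 := by rw [mul_sub, ← h1s, ← h1r, sub_self]
  have hsrk : (s - r) * c * k₁ = 0 := mid _ c _ (swap _ _ hsr)
  -- k₁ * c = (r - s) * c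
  have hk1c : k₁ * c = r * c - s * c := by
    have : s * c + k₁ * c = c * c := by rw [← add_mul]; exact hskc
    rw [hrc, ← this]; abel
  -- k₁ * c * k₁ = 0
  have hkck : k₁ * c * k₁ = 0 := by
    have : k₁ * c * k₁ = -((s - r) * c * k₁) := by
      rw [hk1c]; noncomm_ring
    rw [this, hsrk, neg_zero]
  -- k₁ * k₁ * c = 0
  have hkkc : k₁ * (k₁ * c) = 0 := swap _ _ hkck
  -- (k₁ * c) * c = 0
  have hkcc : (k₁ * c) * c = 0 := by
    have : k₁ * (c * c) = 0 := by
      rw [← hrc, ← mul_assoc, ← h1r, mul_assoc]; exact hkkc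
    rwa [mul_assoc]
  -- c * (k₁ * c) = 0
  have hckc : c * (k₁ * c) = 0 := swap _ _ hkcc
  -- k₁ * c = 0
  have hk1c0 : k₁ * c = 0 := by
    apply sq0
    calc k₁ * c * (k₁ * c) = k₁ * (c * (k₁ * c)) := by noncomm_ring
    _ = 0 := by rw [hckc, mul_zero]
  have hck10 : c * k₁ = 0 := swap _ _ hk1c0
  -- c * s = c * c
  have hcs' : c * c = c * s := by
    rw [hcs, mul_add, hck10, add_zero]
  -- apply maximality to k₁ + c
  have hk : k₁ + c = k₁ := by
    apply hmax
    · intro h0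
      have hk1eq : k₁ = -c := eq_neg_of_add_eq_zero_left h0
      apply hk₁
      have hc0 : c = 0 := by
        apply sq0
        have : c * -c = 0 := by rw [← hk1eq]; exact hck10
        rwa [mul_neg, neg_eq_zero] at this
      rw [hk1eq, hc0, neg_zero]
    · have e1 : (k₁ + c) * (k₁ + c) = k₁ * k₁ + k₁ * c + c * k₁ + c * c := by
        noncomm_ring
      rw [e1, hk1c0, hck10, add_zero, add_zero, h1r, hcr, ← add_mul]
    · have e1 : (k₁ + c) * (k₁ + c) = k₁ * k₁ + k₁ * c + c * k₁ + c * c := by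
        noncomm_ring
      rw [e1, hk1c0, hck10, add_zero, add_zero, h1s, hcs', ← add_mul]
    · rw [mul_add, hk1c0, add_zero]
  have := hk
  rwa [add_eq_left] at this
end

section
/- Let R be a commutative reduced ring which is integrally closed in a commutative reduced rr-good ring S containing R as a subring. Then R is rr-good, and rr-infima in R coincide with those computed in S. -/
/-- If a commutative reduced ring `R` is integrally closed in a commutative
reduced rr-good ring `S` containing it, then `R` is rr-good and rr-infima in
`R` coincide with those computed in `S`. -/
theorem stmt_9 {S : Type*} [CommRing S] [IsReduced S] (R : Subring S)
    (hgoodS : ∀ x y : S, ∃ z : S, z * z = z * x ∧ z * z = z * y ∧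
      ∀ w : S, w * w = w * x → w * w = w * y → w * w = w * z)
    (hic : ∀ s : S, ∀ p : Polynomial R, p.Monic →
      Polynomial.eval₂ R.subtype s p = 0 → s ∈ R) :
    ∀ a b : R, ∃ c : R,
      (c * c = c * a ∧ c * c = c * b ∧
        ∀ d : R, d * d = d * a → d * d = d * b → d * d = d * c) ∧
      ((c : S) * c = c * a ∧ (c : S) * c = c * b ∧
        ∀ w : S, w * w = w * (a : S) → w * w = w * (b : S) → w * w = w * c) := by
  intro a b
  obtain ⟨z, hza, hzb, hzmin⟩ := hgoodS (a : S) (b : S)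
  have hzR : z ∈ R := by
    apply hic z (Polynomial.X ^ 2 - Polynomial.C a * Polynomial.X)
    · exact Polynomial.monic_X_pow_sub (lt_of_le_of_lt (Polynomial.degree_C_mul_X_le a) (by norm_num : (1 : WithBot ℕ) < 2))
    · simp only [Polynomial.eval₂_sub, Polynomial.eval₂_mul, Polynomial.eval₂_pow,
        Polynomial.eval₂_X, Polynomial.eval₂_C]
      rw [pow_two, hza, mul_comm]
      exact sub_self _
  refine ⟨⟨z, hzR⟩, ⟨?_, ?_, ?_⟩, ?_, ?_, ?_⟩
  · exact Subtype.ext hza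
  · exact Subtype.ext hzb
  · intro d hda hdb
    exact Subtype.ext (hzmin (d : S) (congrArg Subtype.val hda) (congrArg Subtype.val hdb))
  · exact hza
  · exact hzb
  · exact hzmin
end

section
/- Let R be a reduced ring and a, b ∈ R with a ≤_rr b. Then every prime ideal containing b also contains a. -/
/-- If `a ≤rr b` in a reduced ring, then every prime (two-sided) ideal
containing `b` also contains `a`. -/
theorem stmt_10 {R : Type*} [Ring R] [IsReduced R] (a b : R)
    (hab : a * a = a * b) (p : Ideal R)
    (hright : ∀ x ∈ p, ∀ r : R, x * r ∈ p)
    (hprime : (p : Set R) ≠ Set.univ ∧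
      ∀ x y : R, (∀ r : R, x * r * y ∈ p) → x ∈ p ∨ y ∈ p)
    (hb : b ∈ p) : a ∈ p := by
  set c := a - b with hc
  have hac : a * c = 0 := by
    rw [hc, mul_sub, hab, sub_self]
  have hca : c * a = 0 := by
    have : (c * a) ^ 2 = 0 := by
      simp only [pow_two, mul_assoc]
      rw [show a * (c * a) = (a * c) * a from (mul_assoc a c a).symm, hac, zero_mul, mul_zero]
    exact IsReduced.eq_zero _ ⟨2, this⟩
  have key : ∀ r : R, a * r * a ∈ p := by
    intro r
    have harc : a * r * c = 0 := by
      have h2 : (a * r * c) ^ 2 = 0 := by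
        simp only [pow_two, mul_assoc]
        rw [show c * (a * (r * c)) = (c * a) * (r * c) by rw [mul_assoc], hca, zero_mul, mul_zero, mul_zero]
      exact IsReduced.eq_zero _ ⟨2, h2⟩
    have : a * r * a = a * r * b := by
      have h3 : a * r * a - a * r * b = 0 := by
        rw [show a * r * a - a * r * b = a * r * c by rw [hc, mul_sub]]
        exact harc
      exact sub_eq_zero.mp h3
    rw [this]
    exact Ideal.mul_mem_left p (a * r) hb
  rcases hprime.2 a a key with h | h <;> exact h
end

section
/- Suppose R and S are reduced rings, R is rr-good, and φ : R → S is a surjective ring homomorphism. If s, s' ∈ S are rr-orthogonal (their only common rr-lower bound is 0) and r ∈ R satisfies φ(r) = s, then there exists r' ∈ R with φ(r') = s' such that r and r' are rr-orthogonal. -/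
/-- rr-orthogonal pairs lift along surjections out of rr-good reduced rings. -/
theorem stmt_11 {R S : Type*} [Ring R] [IsReduced R] [Ring S] [IsReduced S]
    (hgood : ∀ a b : R, ∃ c : R, c * c = c * a ∧ c * c = c * b ∧
      ∀ d : R, d * d = d * a → d * d = d * b → d * d = d * c)
    (φ : R →+* S) (hsurj : Function.Surjective φ)
    (s s' : S)
    (horth : ∀ t : S, t * t = t * s → t * t = t * s' → t = 0)
    (r : R) (hr : φ r = s) :
    ∃ r' : R, φ r' = s' ∧
      ∀ c : R, c * c = c * r → c * c = c * r' → c = 0 := by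
  -- basic facts in a reduced ring
  have sq_zero : ∀ x : R, x * x = 0 → x = 0 := by
    intro x h
    exact IsNilpotent.eq_zero ⟨2, by rw [pow_two, h]⟩
  have swap_zero : ∀ x y : R, x * y = 0 → y * x = 0 := by
    intro x y h
    apply sq_zero
    calc y * x * (y * x) = y * (x * y) * x := by
          rw [mul_assoc, mul_assoc, mul_assoc, ← mul_assoc x y x]
    _ = 0 := by rw [h, mul_zero, zero_mul]
  obtain ⟨r₀, hr₀⟩ := hsurj s'
  obtain ⟨e, he1, he2, he3⟩ := hgood r r₀
  -- φ e is a common rr-lower bound of s and s', hence 0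
  have hφe : φ e = 0 := by
    apply horth
    · rw [← map_mul, he1, map_mul, hr]
    · rw [← map_mul, he2, map_mul, hr₀]
  refine ⟨r₀ - e, by rw [map_sub, hr₀, hφe, sub_zero], ?_⟩
  intro c hc1 hc2
  -- e * e = r₀ * e
  have he2' : e * e = r₀ * e := by
    have h0 : e * (e - r₀) = 0 := by rw [mul_sub, he2, sub_self]
    have h1 : (e - r₀) * e = 0 := swap_zero _ _ h0
    have h2 : e * e - r₀ * e = 0 := by rw [← sub_mul]; exact h1
    exact sub_eq_zero.mp h2
  -- key: c * e = 0
  have hce : c * e = 0 := by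
    have hsplit : c * c = c * r₀ - c * e := by rw [hc2, mul_sub]
    have h1 : c * c * e = 0 := by
      calc c * c * e = (c * r₀ - c * e) * e := by rw [hsplit]
      _ = c * (r₀ * e) - c * (e * e) := by rw [sub_mul, mul_assoc, mul_assoc]
      _ = 0 := by rw [← he2', sub_self]
    have h2 : (c * e) * c = 0 := swap_zero c (c * e) (by rw [← mul_assoc]; exact h1)
    apply sq_zero
    calc (c * e) * (c * e) = ((c * e) * c) * e := by rw [← mul_assoc]
    _ = 0 := by rw [h2, zero_mul]
  -- hence c ≤rr r₀
  have hc3 : c * c = c * r₀ := by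
    have h := hc2
    rw [mul_sub, hce, sub_zero] at h
    exact h
  -- universality: c ≤rr e, so c² = c*e = 0
  have hf := he3 c hc1 hc3
  rw [hce] at hf
  exact sq_zero c hf
end

section
/- Let R be a reduced ring and I an ideal generated by central idempotents, S = R/I, φ : R → S the quotient map. If a ∧_rr b = c exists in R, then φ(c) = φ(a) ∧_rr φ(b) in S. Consequently if R is rr-good then S is rr-good. -/
/-- If `I = ker φ` is generated by central idempotents then `φ` preserves
rr-infima; consequently, if `R` is rr-good so is its image. -/
theorem stmt_12 {R S : Type*} [Ring R] [IsReduced R] [Ring S] [IsReduced S]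
    (φ : R →+* S) (hsurj : Function.Surjective φ)
    (hidem : ∀ x : R, φ x = 0 →
      ∃ e : R, φ e = 0 ∧ e * e = e ∧ (∀ r : R, e * r = r * e) ∧ e * x = x) :
    (∀ a b c : R,
      (c * c = c * a ∧ c * c = c * b ∧
        ∀ d : R, d * d = d * a → d * d = d * b → d * d = d * c) →
      (φ c * φ c = φ c * φ a ∧ φ c * φ c = φ c * φ b ∧
        ∀ t : S, t * t = t * φ a → t * t = t * φ b → t * t = t * φ c)) ∧
    ((∀ a b : R, ∃ c : R, c * c = c * a ∧ c * c = c * b ∧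
        ∀ d : R, d * d = d * a → d * d = d * b → d * d = d * c) →
      ∀ x y : S, ∃ z : S, z * z = z * x ∧ z * z = z * y ∧
        ∀ t : S, t * t = t * x → t * t = t * y → t * t = t * z) := by
  have key : ∀ a b c : R,
      (c * c = c * a ∧ c * c = c * b ∧
        ∀ d : R, d * d = d * a → d * d = d * b → d * d = d * c) →
      (φ c * φ c = φ c * φ a ∧ φ c * φ c = φ c * φ b ∧
        ∀ t : S, t * t = t * φ a → t * t = t * φ b → t * t = t * φ c) := by
    rintro a b c ⟨h1, h2, h3⟩
    refine ⟨by rw [← map_mul, ← map_mul, h1], by rw [← map_mul, ← map_mul, h2], ?_⟩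
    intro t ht1 ht2
    obtain ⟨d, rfl⟩ := hsurj t
    obtain ⟨e₁, he₁0, he₁idem, he₁c, he₁⟩ := hidem (d * d - d * a)
      (by rw [map_sub, map_mul, map_mul, ht1, sub_self])
    obtain ⟨e₂, he₂0, he₂idem, he₂c, he₂⟩ := hidem (d * d - d * b)
      (by rw [map_sub, map_mul, map_mul, ht2, sub_self])
    set f : R := e₁ + e₂ - e₁ * e₂ with hf
    have t1 : e₂ * e₁ = e₁ * e₂ := he₂c e₁
    have t2 : e₁ * e₂ * e₁ = e₁ * e₂ := by rw [mul_assoc, t1, ← mul_assoc, he₁idem]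
    have hfe₁ : f * e₁ = e₁ := by rw [hf, sub_mul, add_mul, he₁idem, t1, t2]; abel
    have hfe₂ : f * e₂ = e₂ := by rw [hf, sub_mul, add_mul, he₂idem, mul_assoc, he₂idem]; abel
    have hfc : ∀ r : R, f * r = r * f := by
      intro r
      have u1 : e₁ * e₂ * r = r * (e₁ * e₂) := by
        rw [mul_assoc, he₂c r, ← mul_assoc, he₁c r, mul_assoc]
      rw [hf, sub_mul, add_mul, mul_sub, mul_add, he₁c r, he₂c r, u1]
    have u2 : f * (e₁ * e₂) = e₁ * e₂ := by rw [← mul_assoc, hfe₁]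
    have hfidem : f * f = f := by
      nth_rewrite 2 [hf]
      rw [mul_sub, mul_add, hfe₁, hfe₂, u2, ← hf]
    have hf0 : φ f = 0 := by rw [hf]; simp [he₁0, he₂0]
    set d' : R := d - f * d with hd'
    have hφd' : φ d' = φ d := by rw [hd']; simp [hf0]
    have e1' : d * (f * d) = f * (d * d) := by
      rw [← mul_assoc, ← hfc d, mul_assoc]
    have e2' : (f * d) * (f * d) = f * (d * d) := by
      rw [mul_assoc, e1', ← mul_assoc, hfidem]
    have hdd : d' * d' = d * d - f * (d * d) := by
      rw [hd', sub_mul, mul_sub, mul_sub, e1', e2', mul_assoc]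
      abel
    have hda : d' * a = d * a - f * (d * a) := by rw [hd', sub_mul, mul_assoc]
    have hdb : d' * b = d * b - f * (d * b) := by rw [hd', sub_mul, mul_assoc]
    have hdc : d' * c = d * c - f * (d * c) := by rw [hd', sub_mul, mul_assoc]
    have key1 : f * (d * d) - f * (d * a) = d * d - d * a := by
      rw [← mul_sub, ← he₁, ← mul_assoc, hfe₁]
    have key2 : f * (d * d) - f * (d * b) = d * d - d * b := by
      rw [← mul_sub, ← he₂, ← mul_assoc, hfe₂]
    have hd'a : d' * d' = d' * a := by
      rw [hdd, hda, sub_eq_sub_iff_sub_eq_sub]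
      exact key1.symm
    have hd'b : d' * d' = d' * b := by
      rw [hdd, hdb, sub_eq_sub_iff_sub_eq_sub]
      exact key2.symm
    have hd'c : d' * d' = d' * c := h3 d' hd'a hd'b
    calc φ d * φ d = φ d' * φ d' := by rw [hφd']
      _ = φ (d' * c) := by rw [← map_mul, hd'c]
      _ = φ d * φ c := by rw [map_mul, hφd']
  refine ⟨key, ?_⟩
  intro H x y
  obtain ⟨a, rfl⟩ := hsurj x
  obtain ⟨b, rfl⟩ := hsurj y
  obtain ⟨c, hc⟩ := H a b
  exact ⟨φ c, key a b c hc⟩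
end

section
/- Let R be a reduced ring with only trivial idempotents (indecomposable), u a central unit and b ∈ R. If c ≤_rr u and c ≤_rr b, then c = 0 or c = u = b. In particular the rr-infimum u ∧_rr b always exists. -/
/-- In an indecomposable reduced ring, any common rr-lower bound `c` of a
central unit `u` and an element `b` satisfies `c = 0` or `c = u = b`;
in particular `u ∧rr b` exists. -/
theorem stmt_13 {R : Type*} [Ring R] [IsReduced R]
    (hind : ∀ e : R, e * e = e → e = 0 ∨ e = 1)
    (u b : R) (hu : IsUnit u) (hc : ∀ r : R, u * r = r * u) :
    (∀ c : R, c * c = c * u → c * c = c * b → c = 0 ∨ (c = u ∧ u = b)) ∧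
    (∃ d : R, d * d = d * u ∧ d * d = d * b ∧
      ∀ c : R, c * c = c * u → c * c = c * b → c * c = c * d) := by
  obtain ⟨v, rfl⟩ := hu
  have hcomm : ∀ r : R, (↑v⁻¹ : R) * r = r * ↑v⁻¹ := by
    intro r
    calc (↑v⁻¹ : R) * r = ↑v⁻¹ * (r * ↑v) * ↑v⁻¹ := by
          rw [mul_assoc, mul_assoc, Units.mul_inv, mul_one]
      _ = ↑v⁻¹ * (↑v * r) * ↑v⁻¹ := by rw [hc r]
      _ = r * ↑v⁻¹ := by rw [← mul_assoc, Units.inv_mul, one_mul]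
  have part1 : ∀ c : R, c * c = c * ↑v → c * c = c * b → c = 0 ∨ (c = ↑v ∧ (↑v : R) = b) := by
    intro c h1 h2
    set e : R := c * ↑v⁻¹ with he
    have hid : e * e = e := by
      have : e * e = c * c * (↑v⁻¹ * ↑v⁻¹) := by
        rw [he, mul_assoc, ← mul_assoc (↑v⁻¹ : R) c, hcomm c]
        simp [mul_assoc]
      rw [this, h1, mul_assoc, ← mul_assoc (↑v : R), Units.mul_inv, one_mul, he]
    have hcu : e * ↑v = c := by
      simp [he, mul_assoc]
    rcases hind e hid with h0 | h1'
    · left; rw [← hcu, h0, zero_mul]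
    · right
      have hcv : c = ↑v := by rw [← hcu, h1', one_mul]
      refine ⟨hcv, ?_⟩
      have : (↑v : R) * ↑v = ↑v * b := by rw [hcv] at h2; exact h2
      exact (Units.mul_right_inj v).mp this
  refine ⟨part1, ?_⟩
  by_cases hub : (↑v : R) = b
  · exact ⟨↑v, rfl, by rw [hub], fun c h1 h2 => h1⟩
  · refine ⟨0, by simp, by simp, fun c h1 h2 => ?_⟩
    rcases part1 c h1 h2 with h0 | ⟨_, h⟩
    · rw [h0]
    · exact absurd h hub
end

section
/- Let R be a reduced ring and S a multiplicatively closed set of central non-zero-divisors, with localization RS⁻¹ (also reduced, containing R). If for all a, b ∈ R and s ∈ S the rr-infimum of as and bs exists in R and equals (a ∧_rr b)s, and r = a ∧_rr b in R, then r = a ∧_rr b in RS⁻¹. -/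
/-- If multiplication by elements of `M` distributes over rr-infima in `R`,
then rr-infima in `R` remain rr-infima in the localization `RS⁻¹`. -/
theorem stmt_15 {R T : Type*} [CommRing R] [IsReduced R] [CommRing T] [IsReduced T]
    (M : Submonoid R) (hnzd : ∀ s ∈ M, ∀ x : R, s * x = 0 → x = 0)
    [Algebra R T] [IsLocalization M T]
    (hdist : ∀ a b c : R,
      (c * c = c * a ∧ c * c = c * b ∧
        ∀ d : R, d * d = d * a → d * d = d * b → d * d = d * c) →
      ∀ s ∈ M,
        ((c * s) * (c * s) = (c * s) * (a * s) ∧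
          (c * s) * (c * s) = (c * s) * (b * s) ∧
          ∀ d : R, d * d = d * (a * s) → d * d = d * (b * s) →
            d * d = d * (c * s)))
    (a b r : R)
    (hr : r * r = r * a ∧ r * r = r * b ∧
      ∀ d : R, d * d = d * a → d * d = d * b → d * d = d * r) :
    algebraMap R T r * algebraMap R T r = algebraMap R T r * algebraMap R T a ∧
    algebraMap R T r * algebraMap R T r = algebraMap R T r * algebraMap R T b ∧
    ∀ t : T, t * t = t * algebraMap R T a → t * t = t * algebraMap R T b →
      t * t = t * algebraMap R T r := by
  have hM : M ≤ nonZeroDivisors R := fun s hs => by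
    rw [mem_nonZeroDivisors_iff_right]
    intro x hx
    exact hnzd s hs x (by rwa [mul_comm])
  have hinj : Function.Injective (algebraMap R T) := IsLocalization.injective T hM
  set f := algebraMap R T with hf
  refine ⟨by rw [← map_mul, ← map_mul, hr.1], by rw [← map_mul, ← map_mul, hr.2.1], ?_⟩
  intro t hta htb
  obtain ⟨⟨x, s⟩, rfl⟩ := IsLocalization.mk'_surjective M t
  dsimp only at hta htb ⊢
  set t := IsLocalization.mk' T x s with ht
  have hspec : f s * t = f x := IsLocalization.mk'_spec' T x s
  have key : ∀ c : R, t * t = t * f c → x * x = x * (c * s) := by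
    intro c hc
    apply hinj
    have : (f s * t) * (f s * t) = (f s * t) * (f c * f s) := by
      calc (f s * t) * (f s * t) = (f s * f s) * (t * t) := by ring
        _ = (f s * f s) * (t * f c) := by rw [hc]
        _ = (f s * t) * (f c * f s) := by ring
    rw [hspec] at this
    rw [map_mul, map_mul, map_mul, this]
  have hxr : x * x = x * (r * s) := (hdist a b r hr s s.2).2.2 x (key a hta) (key b htb)
  have hunit : IsUnit (f s) := IsLocalization.map_units T s
  apply hunit.mul_left_cancel
  apply hunit.mul_left_cancel
  calc f s * (f s * (t * t)) = (f s * t) * (f s * t) := by ring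
    _ = f x * f x := by rw [hspec]
    _ = f (x * (r * s)) := by rw [← map_mul, hxr]
    _ = (f s * t) * f r * f s := by rw [hspec]; rw [map_mul, map_mul]; ring
    _ = f s * (f s * (t * f r)) := by ring
end

section
/- Let R be a reduced ring and (M, ≤) a totally ordered monoid with strict order. Then the generalized power series ring S = [[R^{M,≤}]] is reduced. -/
private lemma sq_zero_aux_s18 (Γ R : Type*) [AddCommMonoid Γ] [LinearOrder Γ] [IsOrderedCancelAddMonoid Γ]
    [Ring R] [IsReduced R] (x : HahnSeries Γ R) (h : x * x = 0) : x = 0 := by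
  by_contra hx
  have := HahnSeries.coeff_mul_order_add_order x x
  rw [h, HahnSeries.coeff_zero] at this
  have hlc : x.leadingCoeff = 0 := IsReduced.eq_zero _ ⟨2, by rw [sq]; exact this.symm⟩
  exact hx (HahnSeries.leadingCoeff_eq_zero.mp hlc)

private lemma pow_zero_aux (Γ R : Type*) [AddCommMonoid Γ] [LinearOrder Γ] [IsOrderedCancelAddMonoid Γ]
    [Ring R] [IsReduced R] : ∀ n (x : HahnSeries Γ R), x ^ n = 0 → x = 0 := by
  intro n
  induction n using Nat.strong_induction_on with
  | _ n ih =>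
    intro x hx
    match n with
    | 0 =>
      rw [pow_zero] at hx
      exact (subsingleton_of_zero_eq_one hx.symm).elim x 0
    | 1 => simpa using hx
    | (m + 2) =>
      have h2 : (x * x) ^ (m + 1) = 0 := by
        have : (x * x) ^ (m + 1) = x ^ (m + 2) * x ^ m := by
          rw [← sq, ← pow_mul, ← pow_add]
          congr 1
          omega
        rw [this, hx, zero_mul]
      have := ih (m + 1) (by omega) (x * x) h2
      exact sq_zero_aux_s18 Γ R x this

/-- The generalized (Hahn) power series ring over a reduced ring, with exponents
in a strictly totally ordered (cancellative) monoid, is reduced. -/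
theorem stmt_18 (Γ R : Type*) [AddCommMonoid Γ] [LinearOrder Γ] [IsOrderedCancelAddMonoid Γ]
    [Ring R] [IsReduced R] : IsReduced (HahnSeries Γ R) := by
  constructor
  rintro x ⟨n, hn⟩
  exact pow_zero_aux Γ R n x hn
end

section
/- Let R be a reduced ring and (M, ≤) a totally ordered monoid with strict order. Then every idempotent of the generalized power series ring S = [[R^{M,≤}]] is a constant series coming from an idempotent of R; i.e., the Boolean algebra of idempotents of S equals that of R. -/
/-- In a reduced ring, idempotents are central. -/
lemma idem_central {R : Type*} [Ring R] [IsReduced R] {a : R} (ha : a * a = a)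
    (x : R) : a * x = x * a := by
  have h1 : a * x - a * x * a = 0 := by
    have hsq : (a * x - a * x * a) * (a * x - a * x * a) = 0 := by
      have key : (x - x * a) * a = 0 := by
        rw [sub_mul, mul_assoc, ha, sub_self]
      have : (a * x - a * x * a) * (a * x - a * x * a)
          = a * ((x - x * a) * a) * (x - x * a) := by noncomm_ring
      rw [this, key, mul_zero, zero_mul]
    exact IsReduced.eq_zero _ ⟨2, by rw [pow_two]; exact hsq⟩
  have h2 : x * a - a * x * a = 0 := by
    have hsq : (x * a - a * x * a) * (x * a - a * x * a) = 0 := by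
      have key : a * (x - a * x) = 0 := by
        rw [mul_sub, ← mul_assoc, ha, sub_self]
      have : (x * a - a * x * a) * (x * a - a * x * a)
          = (x - a * x) * (a * (x - a * x)) * a := by noncomm_ring
      rw [this, key, mul_zero, zero_mul]
    exact IsReduced.eq_zero _ ⟨2, by rw [pow_two]; exact hsq⟩
  have e1 : a * x = a * x * a := sub_eq_zero.mp h1
  have e2 : x * a = a * x * a := sub_eq_zero.mp h2
  rw [e1, e2]

/-- Every idempotent of the generalized (Hahn) power series ring over a reduced
ring is a constant series coming from an idempotent of the base ring. -/
theorem stmt_19 (Γ R : Type*) [AddCommMonoid Γ] [LinearOrder Γ] [IsOrderedCancelAddMonoid Γ]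
    [Ring R] [IsReduced R] (f : HahnSeries Γ R) (hf : f * f = f) :
    ∃ r : R, r * r = r ∧ f = HahnSeries.single (0 : Γ) r := by
  by_cases hf0 : f = 0
  · exact ⟨0, by simp, by simp [hf0]⟩
  set d := f.order with hd
  have hlead : f.coeff d ≠ 0 := HahnSeries.coeff_order_eq_zero.not.mpr hf0
  have hhelp : ∀ g : Γ, g < d + d → (f * f).coeff g = 0 := by
    intro g hg
    rw [HahnSeries.coeff_mul]
    apply Finset.sum_eq_zero
    intro ij hij
    rw [Finset.mem_addAntidiagonal] at hij
    obtain ⟨h1, h2, h3⟩ := hij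
    have l1 : d ≤ ij.1 := HahnSeries.order_le_of_coeff_ne_zero h1
    have l2 : d ≤ ij.2 := HahnSeries.order_le_of_coeff_ne_zero h2
    exact absurd (h3 ▸ hg) (not_lt.2 (add_le_add l1 l2))
  have hlc : f.leadingCoeff = f.coeff d := by
    exact HahnSeries.leadingCoeff_eq
  have hdd : (f * f).coeff (d + d) = f.coeff d * f.coeff d := by
    have := HahnSeries.coeff_mul_order_add_order f f
    rwa [hlc, ← hd] at this
  have hd0 : d = 0 := by
    rcases lt_trichotomy d 0 with h | h | h
    · exfalso
      have hlt : d + d < d := by simpa using add_lt_add_left h d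
      have hz : f.coeff (d + d) = 0 := HahnSeries.coeff_eq_zero_of_lt_order hlt
      rw [hf, hz] at hdd
      exact hlead (IsReduced.eq_zero _ ⟨2, by rw [pow_two]; exact hdd.symm⟩)
    · exact h
    · exfalso
      have hlt : d < d + d := by simpa using add_lt_add_left h d
      have := hhelp d hlt
      rw [hf] at this
      exact hlead this
  have ha : f.coeff 0 * f.coeff 0 = f.coeff 0 := by
    have := hdd
    rw [hf, hd0, add_zero] at this
    exact this.symm
  set a := f.coeff 0 with haa
  have ha0 : a ≠ 0 := by rw [haa, ← hd0]; exact hlead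
  refine ⟨a, ha, ?_⟩
  ext g
  rw [HahnSeries.coeff_single]
  split_ifs with hg
  · rw [hg]
  by_contra hb
  have hT : (f.support \ {0} : Set Γ).Nonempty := ⟨g, hb, hg⟩
  have hWF : (f.support \ {0} : Set Γ).IsWF := f.isWF_support.mono Set.diff_subset
  set e := hWF.min hT with he
  obtain ⟨hesupp, hene'⟩ := hWF.min_mem hT
  have hene : e ≠ 0 := hene'
  have hb0 : f.coeff e ≠ 0 := hesupp
  have hmin : ∀ x : Γ, f.coeff x ≠ 0 → x ≠ 0 → e ≤ x := by
    intro x hx hxne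
    exact hWF.min_le hT ⟨hx, hxne⟩
  have hcoe : (f * f).coeff e = a * f.coeff e + f.coeff e * a := by
    rw [HahnSeries.coeff_mul]
    have hsub : Finset.antidiagonal f.isPWO_support f.isPWO_support e
        = ({((0 : Γ), e), (e, (0 : Γ))} : Finset (Γ × Γ)) := by
      ext ij
      rw [Finset.mem_antidiagonal, Finset.mem_insert, Finset.mem_singleton]
      constructor
      · rintro ⟨h1, h2, h3⟩
        have o1 : (0 : Γ) ≤ ij.1 := hd0 ▸ HahnSeries.order_le_of_coeff_ne_zero h1
        have o2 : (0 : Γ) ≤ ij.2 := hd0 ▸ HahnSeries.order_le_of_coeff_ne_zero h2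
        by_cases hz : ij.1 = 0
        · left
          have : ij.2 = e := by rw [hz, zero_add] at h3; exact h3
          exact Prod.ext hz this
        · right
          have he1 : e ≤ ij.1 := hmin ij.1 h1 hz
          have h2z : ij.2 = 0 := by
            by_contra hcon
            have h2pos : 0 < ij.2 := lt_of_le_of_ne o2 (Ne.symm hcon)
            have : e < ij.1 + ij.2 :=
              lt_of_le_of_lt (by simpa using he1) (add_lt_add_right h2pos ij.1)
            exact absurd h3 (ne_of_gt this)
          have h1e : ij.1 = e := by rw [h2z, add_zero] at h3; exact h3
          exact Prod.ext h1e h2z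
      · rintro (h | h) <;> subst h
        · exact ⟨ha0, hb0, zero_add e⟩
        · exact ⟨hb0, ha0, add_zero e⟩
    rw [hsub]
    rw [Finset.sum_insert (by
      simp only [Finset.mem_singleton, Prod.ext_iff]
      rintro ⟨h1, -⟩
      exact hene h1.symm)]
    simp [haa]
  rw [hf] at hcoe
  set b := f.coeff e with hbb
  have hcent : a * b = b * a := idem_central ha b
  rw [← hcent] at hcoe
  have hab : a * b = a * b + a * b := by
    have h1 : a * b = a * (a * b + a * b) := congrArg (fun t => a * t) hcoe
    rw [mul_add, ← mul_assoc, ha] at h1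
    exact h1
  have hab0 : a * b = 0 := left_eq_add.mp hab
  have : b = 0 := by rw [hcoe, hab0, add_zero]
  exact hb0 this
end
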